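/- Let S be a Polish space, let μ_n be probability measures on S converging weakly to μ, and let f_n : S → ℝ be measurable functions uniformly bounded by M such that f_n converges continuously to f (i.e., f_n(a_n) → f(a) whenever a_n → a in S). Then ∫ f_n dμ_n → ∫ f dμ. -/

import Mathlib

open MeasureTheory Filter
open scoped ENNReal NNReal

/-- Continuous convergence implies locally uniform closeness to the limit value. -/
private lemma serfozo_local_unif {S : Type*} [MetricSpace S]
    (f : ℕ → S → ℝ) (flim : S → ℝ)
    (hcont : ∀ (a : S) (a' : ℕ → S), Tendsto a' atTop (nhds a) →
      Tendsto (fun n => f n (a' n)) atTop (nhds (flim a)))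
    (a : S) {ε : ℝ} (hε : 0 < ε) :
    ∃ δ > (0 : ℝ), ∃ N : ℕ, ∀ n ≥ N, ∀ x : S, dist x a < δ → |f n x - flim a| ≤ ε := by
  by_contra h
  push_neg at h
  -- build sequences n k ≥ k and x k close to a violating the bound
  choose n hn x hx hbig using fun k : ℕ =>
    h (1 / (k + 1 : ℝ)) (by positivity) k
  classical
  set y : ℕ → S := fun m => if hm : ∃ k, n k = m then x hm.choose else a with hy
  have hytend : Tendsto y atTop (nhds a) := by
    rw [Metric.tendsto_atTop]
    intro ε' hε'
    obtain ⟨K, hK⟩ := exists_nat_one_div_lt hε'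
    refine ⟨(Finset.range (K + 1)).sup n + 1, fun m hm => ?_⟩
    by_cases hmm : ∃ k, n k = m
    · have hchoice : n hmm.choose = m := hmm.choose_spec
      have hkK : K < hmm.choose := by
        by_contra hkK
        push_neg at hkK
        have : n hmm.choose ≤ (Finset.range (K + 1)).sup n :=
          Finset.le_sup (Finset.mem_range.mpr (Nat.lt_succ_of_le hkK))
        omega
      have : y m = x hmm.choose := by
        rw [hy]; exact dif_pos hmm
      rw [this]
      calc dist (x hmm.choose) a < 1 / (hmm.choose + 1 : ℝ) := hx _
        _ ≤ 1 / (K + 1 : ℝ) := by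
            apply one_div_le_one_div_of_le (by positivity)
            have : (K : ℝ) ≤ hmm.choose := by exact_mod_cast hkK.le
            linarith
        _ < ε' := hK
    · have : y m = a := by rw [hy]; exact dif_neg hmm
      rw [this]; simpa using hε'
  have htend := hcont a y hytend
  rw [Metric.tendsto_atTop] at htend
  obtain ⟨M1, hM1⟩ := htend ε hε
  have hmem : ∃ k, n k = n M1 := ⟨M1, rfl⟩
  have hval : y (n M1) = x hmem.choose := by rw [hy]; exact dif_pos hmem
  have hspec : n hmem.choose = n M1 := hmem.choose_spec
  have h1 : dist (f (n M1) (y (n M1))) (flim a) < ε := hM1 _ (hn M1)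
  rw [hval, Real.dist_eq] at h1
  have h2 := hbig hmem.choose
  rw [hspec] at h2
  linarith

/-- Generalized dominated convergence for varying measures (Serfozo): if probability
measures `μn` converge weakly to `μ`, and the uniformly bounded measurable functions
`f n` converge continuously to `flim`, then `∫ f n dμn → ∫ flim dμ`. -/
theorem serfozo_generalized_dominated_convergence
    {S : Type*} [TopologicalSpace S] [PolishSpace S] [MeasurableSpace S] [BorelSpace S]
    (μn : ℕ → Measure S) (μ : Measure S)
    [∀ n, IsProbabilityMeasure (μn n)] [IsProbabilityMeasure μ]
    (hweak : ∀ g : BoundedContinuousFunction S ℝ,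
      Tendsto (fun n => ∫ x, g x ∂(μn n)) atTop (nhds (∫ x, g x ∂μ)))
    (f : ℕ → S → ℝ) (flim : S → ℝ) (hf : ∀ n, Measurable (f n))
    (M : ℝ) (hbd : ∀ n x, |f n x| ≤ M)
    (hcont : ∀ (a : S) (a' : ℕ → S), Tendsto a' atTop (nhds a) →
      Tendsto (fun n => f n (a' n)) atTop (nhds (flim a))) :
    Tendsto (fun n => ∫ x, f n x ∂(μn n)) atTop (nhds (∫ x, flim x ∂μ)) := by
  letI := TopologicalSpace.upgradeIsCompletelyMetrizable S
  -- pointwise convergence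
  have hpt : ∀ x : S, Tendsto (fun n => f n x) atTop (nhds (flim x)) :=
    fun x => hcont x (fun _ => x) tendsto_const_nhds
  -- bound on flim
  have hflimbd : ∀ x, |flim x| ≤ M := fun x =>
    le_of_tendsto (hpt x).abs (Eventually.of_forall fun n => hbd n x)
  -- M is nonneg
  have hSne : Nonempty S := by
    by_contra hS
    have h1 : μ Set.univ = 1 := measure_univ
    rw [Set.univ_eq_empty_iff.mpr (not_nonempty_iff.mp hS), measure_empty] at h1
    exact zero_ne_one h1
  have hM0 : 0 ≤ M := le_trans (abs_nonneg _) (hbd 0 hSne.some)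
  -- continuity of flim
  have hflimcont : Continuous flim := by
    rw [Metric.continuous_iff]
    intro b ε hε
    obtain ⟨δ, hδ, N, hN⟩ := serfozo_local_unif f flim hcont b (half_pos hε)
    refine ⟨δ, hδ, fun x hx => ?_⟩
    rw [Real.dist_eq]
    have hle : |flim x - flim b| ≤ ε / 2 :=
      le_of_tendsto ((hpt x).sub_const (flim b)).abs
        (eventually_atTop.mpr ⟨N, fun n hn => hN n hn x hx⟩)
    linarith
  -- flim as bounded continuous function
  set flimBCF : BoundedContinuousFunction S ℝ :=
    BoundedContinuousFunction.ofNormedAddCommGroup flim hflimcont M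
      (fun x => by simpa [Real.norm_eq_abs] using hflimbd x) with hflimBCF
  have h2 : Tendsto (fun n => ∫ x, flim x ∂(μn n)) atTop (nhds (∫ x, flim x ∂μ)) := by
    have := hweak flimBCF
    simpa [hflimBCF, BoundedContinuousFunction.coe_ofNormedAddCommGroup] using this
  -- integrability
  have hflimmeas : Measurable flim := hflimcont.measurable
  have intf : ∀ n m : ℕ, Integrable (f n) (μn m) := fun n m =>
    ⟨(hf n).aestronglyMeasurable,
      HasFiniteIntegral.of_bounded (C := M)
        (Eventually.of_forall fun x => by simpa [Real.norm_eq_abs] using hbd n x)⟩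
  have intflim : ∀ m : ℕ, Integrable flim (μn m) := fun m =>
    ⟨hflimmeas.aestronglyMeasurable,
      HasFiniteIntegral.of_bounded (C := M)
        (Eventually.of_forall fun x => by simpa [Real.norm_eq_abs] using hflimbd x)⟩
  -- weak convergence in the ProbabilityMeasure sense
  have hP := (ProbabilityMeasure.tendsto_iff_forall_integral_tendsto
      (μs := fun n => (⟨μn n, inferInstance⟩ : ProbabilityMeasure S))
      (μ := (⟨μ, inferInstance⟩ : ProbabilityMeasure S)) (F := atTop)).mpr fun g => hweak g
  -- main reduction
  have h1 : Tendsto (fun n => ∫ x, f n x ∂(μn n) - ∫ x, flim x ∂(μn n)) atTop (nhds 0) := by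
    rw [NormedAddCommGroup.tendsto_nhds_zero]
    intro ε hε
    -- sets of locally uniform closeness
    set V : ℕ → Set S := fun N =>
      {z | ∃ U : Set S, IsOpen U ∧ z ∈ U ∧ ∀ n ≥ N, ∀ y ∈ U, |f n y - flim y| ≤ ε / 4}
      with hV
    have hVopen : ∀ N, IsOpen (V N) := by
      intro N
      rw [isOpen_iff_forall_mem_open]
      rintro z ⟨U, hU, hzU, hUb⟩
      exact ⟨U, fun y hy => ⟨U, hU, hy, hUb⟩, hU, hzU⟩
    have hVmono : Monotone V := by
      intro N N' hNN' z ⟨U, hU, hzU, hUb⟩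
      exact ⟨U, hU, hzU, fun n hn y hy => hUb n (le_trans hNN' hn) y hy⟩
    have hVunion : ∀ z : S, ∃ N, z ∈ V N := by
      intro z
      obtain ⟨δ, hδ, N, hN⟩ := serfozo_local_unif f flim hcont z (by positivity : (0:ℝ) < ε / 8)
      refine ⟨N, Metric.ball z δ, Metric.isOpen_ball, Metric.mem_ball_self hδ, ?_⟩
      intro n hn y hy
      have hy' : dist y z < δ := Metric.mem_ball.mp hy
      have h1 : |f n y - flim z| ≤ ε / 8 := hN n hn y hy'
      have h2 : |flim y - flim z| ≤ ε / 8 :=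
        le_of_tendsto ((hpt y).sub_const (flim z)).abs
          (eventually_atTop.mpr ⟨N, fun m hm => hN m hm y hy'⟩)
      calc |f n y - flim y| = |(f n y - flim z) - (flim y - flim z)| := by ring_nf
        _ ≤ |f n y - flim z| + |flim y - flim z| := abs_sub _ _
        _ ≤ ε / 4 := by linarith
    set F : ℕ → Set S := fun N => (V N)ᶜ with hF
    have hFclosed : ∀ N, IsClosed (F N) := fun N => (hVopen N).isClosed_compl
    have hFmeas : ∀ N, MeasurableSet (F N) := fun N => (hFclosed N).measurableSet
    have hFanti : Antitone F := fun N N' hNN' =>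
      Set.compl_subset_compl.mpr (hVmono hNN')
    have hFinter : ⋂ N, F N = ∅ := by
      rw [Set.eq_empty_iff_forall_notMem]
      intro z hz
      obtain ⟨N, hN⟩ := hVunion z
      exact (Set.mem_iInter.mp hz N) hN
    have hFto0 : Tendsto (fun N => μ (F N)) atTop (nhds 0) := by
      have := tendsto_measure_iInter_atTop (μ := μ)
        (fun N => (hFmeas N).nullMeasurableSet) hFanti ⟨0, measure_ne_top _ _⟩
      rw [hFinter, measure_empty] at this
      exact this
    -- threshold
    set θ : ℝ≥0∞ := ENNReal.ofReal (ε / (8 * (M + 1))) with hθ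
    have hθpos : 0 < θ := by
      rw [hθ]
      apply ENNReal.ofReal_pos.mpr
      positivity
    obtain ⟨N, hNθ⟩ := (hFto0.eventually_lt_const hθpos).exists
    -- portmanteau for the closed set F N
    have hlimsup : (atTop.limsup fun n => (μn n) (F N)) ≤ μ (F N) :=
      ProbabilityMeasure.limsup_measure_closed_le_of_tendsto hP (hFclosed N)
    have hev : ∀ᶠ n in atTop, (μn n) (F N) < θ :=
      eventually_lt_of_limsup_lt (lt_of_le_of_lt hlimsup hNθ)
    filter_upwards [hev, eventually_ge_atTop N] with n hn hnN
    -- estimate the integral difference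
    have hsub : Integrable (fun x => f n x - flim x) (μn n) := (intf n n).sub (intflim n)
    have key : ∫ x, f n x ∂(μn n) - ∫ x, flim x ∂(μn n) = ∫ x, (f n x - flim x) ∂(μn n) :=
      (integral_sub (intf n n) (intflim n)).symm
    rw [Real.norm_eq_abs, key]
    have habs : |∫ x, (f n x - flim x) ∂(μn n)| ≤ ∫ x, |f n x - flim x| ∂(μn n) := by
      simpa [Real.norm_eq_abs] using norm_integral_le_integral_norm (μ := μn n)
        (f := fun x => f n x - flim x)
    have hsplit : ∫ x, |f n x - flim x| ∂(μn n) =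
        (∫ x in F N, |f n x - flim x| ∂(μn n)) + ∫ x in (F N)ᶜ, |f n x - flim x| ∂(μn n) :=
      (integral_add_compl (hFmeas N) hsub.abs).symm
    -- bound on F N
    have hbound1 : ∫ x in F N, |f n x - flim x| ∂(μn n) ≤ (2 * M) * ((μn n) (F N)).toReal := by
      refine le_trans (le_abs_self _) ?_
      rw [← Real.norm_eq_abs]
      apply norm_setIntegral_le_of_norm_le_const (measure_lt_top _ _)
      intro x _
      rw [Real.norm_eq_abs, abs_abs]
      calc |f n x - flim x| ≤ |f n x| + |flim x| := abs_sub _ _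
        _ ≤ 2 * M := by have := hbd n x; have := hflimbd x; linarith
    -- bound on V N
    have hbound2 : ∫ x in (F N)ᶜ, |f n x - flim x| ∂(μn n) ≤ ε / 4 := by
      have hb : ∫ x in (F N)ᶜ, |f n x - flim x| ∂(μn n) ≤ (ε / 4) * ((μn n) ((F N)ᶜ)).toReal := by
        refine le_trans (le_abs_self _) ?_
        rw [← Real.norm_eq_abs]
        apply norm_setIntegral_le_of_norm_le_const (measure_lt_top _ _)
        intro x hx
        rw [Real.norm_eq_abs, abs_abs]
        have hxV : x ∈ V N := by simpa [hF] using hx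
        obtain ⟨U, _, hxU, hUb⟩ := hxV
        exact hUb n hnN x hxU
      have hle1 : ((μn n) ((F N)ᶜ)).toReal ≤ 1 := by
        have := prob_le_one (μ := μn n) (s := (F N)ᶜ)
        calc ((μn n) ((F N)ᶜ)).toReal ≤ (1 : ℝ≥0∞).toReal :=
              ENNReal.toReal_mono (by simp) this
          _ = 1 := by simp
      calc ∫ x in (F N)ᶜ, |f n x - flim x| ∂(μn n) ≤ (ε / 4) * ((μn n) ((F N)ᶜ)).toReal := hb
        _ ≤ (ε / 4) * 1 := by
            apply mul_le_mul_of_nonneg_left hle1 (by positivity)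
        _ = ε / 4 := by ring
    -- bound the measure term
    have hmeasreal : ((μn n) (F N)).toReal < ε / (8 * (M + 1)) := by
      have hne : (μn n) (F N) ≠ ∞ := measure_ne_top _ _
      rw [hθ] at hn
      exact ENNReal.toReal_lt_of_lt_ofReal hn
    have hbound1' : (2 * M) * ((μn n) (F N)).toReal ≤ ε / 4 := by
      have h0 : 0 ≤ ((μn n) (F N)).toReal := ENNReal.toReal_nonneg
      have h8 : (0:ℝ) < 8 * (M + 1) := by positivity
      have h1 : ((μn n) (F N)).toReal * (8 * (M + 1)) < ε := by
        calc ((μn n) (F N)).toReal * (8 * (M + 1))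
            < (ε / (8 * (M + 1))) * (8 * (M + 1)) :=
              mul_lt_mul_of_pos_right hmeasreal h8
          _ = ε := div_mul_cancel₀ _ (ne_of_gt h8)
      nlinarith [h1, h0, hM0, hε, mul_nonneg hM0 h0]
    calc |∫ x, (f n x - flim x) ∂(μn n)| ≤ ∫ x, |f n x - flim x| ∂(μn n) := habs
      _ = (∫ x in F N, |f n x - flim x| ∂(μn n)) +
          ∫ x in (F N)ᶜ, |f n x - flim x| ∂(μn n) := hsplit
      _ ≤ ε / 4 + ε / 4 := add_le_add (le_trans hbound1 hbound1') hbound2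
      _ < ε := by linarith
  have := h1.add h2
  simpa using this
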